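/- Let Y ∈ ℝ^n, X ∈ ℝ^{n×p}, Λ = (λ₁,…,λ_p) with λ₁ ≥ … ≥ λ_p ≥ 0 and λ₁ > 0, let M = {b ∈ ℝ^p : ‖b‖₂² ≤ p‖Y‖₂⁴/(4λ₁²)}, and define r(b,π) = ½‖Y − Xb‖₂² + π′b on M × C_Λ. Then max_{π ∈ C_Λ} min_{b ∈ M} r(b,π) = min_{b ∈ M} max_{π ∈ C_Λ} r(b,π), and this common value equals min_{b ∈ ℝ^p} [½‖Y − Xb‖₂² + J_Λ(b)]. -/

import Mathlib

open Matrix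

/-- The SLOPE (sorted ℓ₁) norm `J_Λ(b) = ∑ Λᵢ |b|₍ᵢ₎`, expressed (for `Λ` sorted
in decreasing order) as the maximum over permutations of `∑ Λᵢ |b (σ i)|`. -/
noncomputable def slopeNorm {p : ℕ} (Λ : Fin p → ℝ) (b : Fin p → ℝ) : ℝ :=
  ⨆ σ : Equiv.Perm (Fin p), ∑ i, Λ i * |b (σ i)|

/-- The SLOPE objective function `b ↦ ½‖Y - Xb‖₂² + J_Λ(b)`. -/
noncomputable def slopeObj {n p : ℕ} (X : Matrix (Fin n) (Fin p) ℝ) (Y : Fin n → ℝ)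
    (Λ : Fin p → ℝ) (b : Fin p → ℝ) : ℝ :=
  (1 / 2) * ∑ i, (Y i - (X *ᵥ b) i) ^ 2 + slopeNorm Λ b

/-- The unit ball `C_Λ` of the dual SLOPE norm. -/
def dualBall {p : ℕ} (Λ : Fin p → ℝ) : Set (Fin p → ℝ) :=
  {π | ∀ S : Finset (Fin p),
    ∑ j ∈ S, |π j| ≤ ∑ j ∈ Finset.univ.filter (fun j : Fin p => (j : ℕ) < S.card), Λ j}

namespace SlopeAux

open Finset

variable {p : ℕ}

/-- extend a `Fin p` function to `ℕ` by zero. -/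
noncomputable def extF (f : Fin p → ℝ) : ℕ → ℝ := fun k => if h : k < p then f ⟨k, h⟩ else 0

lemma sum_univ_eq_sum_range_ext (f : Fin p → ℝ) :
    ∑ i : Fin p, f i = ∑ i ∈ range p, extF f i := by
  rw [Finset.sum_range fun i => extF f i]
  refine Finset.sum_congr rfl fun i _ => ?_
  simp [extF, i.isLt]

lemma firstSet_card {k : ℕ} (hk : k ≤ p) :
    (univ.filter (fun j : Fin p => (j : ℕ) < k)).card = k := by
  classical
  have : univ.filter (fun j : Fin p => (j : ℕ) < k)
      = Finset.map ⟨Fin.castLE hk, Fin.castLE_injective hk⟩ univ := by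
    ext j
    simp only [mem_filter, mem_univ, true_and, Finset.mem_map, Function.Embedding.coeFn_mk]
    constructor
    · intro hj; exact ⟨⟨j, hj⟩, by simp [Fin.castLE]⟩
    · rintro ⟨i, -, rfl⟩; exact i.isLt
  rw [this, Finset.card_map, Finset.card_univ, Fintype.card_fin]

lemma sum_firstSet_eq_range {k : ℕ} (hk : k ≤ p) (f : Fin p → ℝ) :
    ∑ j ∈ univ.filter (fun j : Fin p => (j : ℕ) < k), f j = ∑ i ∈ range k, extF f i := by
  classical
  rw [Finset.sum_filter, sum_univ_eq_sum_range_ext]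
  have h1 : ∑ i ∈ range p, extF (fun j => if (j : ℕ) < k then f j else 0) i
      = ∑ i ∈ range p, (if i < k then extF f i else 0) := by
    refine Finset.sum_congr rfl fun i hi => ?_
    simp only [extF, Finset.mem_range.mp hi, dif_pos]
  rw [h1, ← Finset.sum_filter]
  congr 1
  ext i
  simp only [mem_filter, mem_range]
  omega

lemma strictMono_fin_nat_le {k : ℕ} (g : Fin k → ℕ) (hg : StrictMono g) (i : Fin k) :
    (i : ℕ) ≤ g i := by
  induction' hi : (i : ℕ) with m ih generalizing i
  · exact Nat.zero_le _
  · have hm : m < k := by omega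
    have hj : (⟨m, hm⟩ : Fin k) < i := by simp [Fin.lt_def, hi]
    have h1 := hg hj
    have h2 := ih ⟨m, hm⟩ rfl
    omega

lemma sum_le_sum_firstSet {Λ : Fin p → ℝ} (hΛanti : Antitone Λ) (S : Finset (Fin p)) :
    ∑ j ∈ S, Λ j ≤ ∑ j ∈ univ.filter (fun j : Fin p => (j : ℕ) < S.card), Λ j := by
  classical
  set k := S.card with hk
  have hkp : k ≤ p := by
    simpa using Finset.card_le_card (Finset.subset_univ S)
  have hSmap : S = Finset.map (S.orderEmbOfFin hk.symm).toEmbedding univ := by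
    ext j
    simp only [Finset.mem_map, mem_univ, true_and, RelEmbedding.coe_toEmbedding]
    constructor
    · intro hj
      have : j ∈ Set.range (S.orderEmbOfFin hk.symm) := by
        rw [Finset.range_orderEmbOfFin]; exact hj
      obtain ⟨i, hi⟩ := this
      exact ⟨i, hi⟩
    · rintro ⟨i, rfl⟩
      exact Finset.orderEmbOfFin_mem S hk.symm i
  have hTmap : univ.filter (fun j : Fin p => (j : ℕ) < k)
      = Finset.map ⟨Fin.castLE hkp, Fin.castLE_injective hkp⟩ univ := by
    ext j
    simp only [mem_filter, mem_univ, true_and, Finset.mem_map, Function.Embedding.coeFn_mk]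
    constructor
    · intro hj; exact ⟨⟨j, hj⟩, by simp [Fin.castLE]⟩
    · rintro ⟨i, -, rfl⟩; exact i.isLt
  rw [hSmap, hTmap, Finset.sum_map, Finset.sum_map]
  refine Finset.sum_le_sum fun i _ => ?_
  refine hΛanti ?_
  have hmono : StrictMono (fun i : Fin k => ((S.orderEmbOfFin hk.symm i : Fin p) : ℕ)) :=
    fun a b hab => by exact_mod_cast (S.orderEmbOfFin hk.symm).strictMono hab
  have := strictMono_fin_nat_le _ hmono i
  simp only [Function.Embedding.coeFn_mk, RelEmbedding.coe_toEmbedding]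
  rw [Fin.le_def]
  simpa [Fin.castLE] using this

lemma abel_nonneg (c d : ℕ → ℝ) (n : ℕ)
    (hD : ∀ k, k ≤ n → 0 ≤ ∑ i ∈ range k, d i)
    (hc_anti : ∀ i, i + 1 < n → c (i + 1) ≤ c i)
    (hc_last : 0 ≤ c (n - 1)) :
    0 ≤ ∑ i ∈ range n, c i * d i := by
  rcases Nat.eq_zero_or_pos n with hn | hn
  · simp [hn]
  have habel := Finset.sum_range_by_parts c d n
  simp only [smul_eq_mul] at habel
  rw [habel]
  have h1 : 0 ≤ c (n - 1) * ∑ i ∈ range n, d i :=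
    mul_nonneg hc_last (hD n le_rfl)
  have h2 : ∑ i ∈ range (n - 1), (c (i + 1) - c i) * ∑ j ∈ range (i + 1), d j ≤ 0 := by
    refine Finset.sum_nonpos fun i hi => ?_
    have hi' : i + 1 < n := by
      have := Finset.mem_range.mp hi; omega
    exact mul_nonpos_of_nonpos_of_nonneg (by linarith [hc_anti i hi'])
      (hD (i + 1) (by omega))
  linarith

lemma abel_le (a c l : ℕ → ℝ) (n : ℕ)
    (hA : ∀ k, k ≤ n → ∑ i ∈ range k, a i ≤ ∑ i ∈ range k, l i)
    (hc_anti : ∀ i, i + 1 < n → c (i + 1) ≤ c i)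
    (hc_last : 0 ≤ c (n - 1)) :
    ∑ i ∈ range n, a i * c i ≤ ∑ i ∈ range n, l i * c i := by
  have h := abel_nonneg c (fun i => l i - a i) n
    (fun k hk => by
      rw [Finset.sum_sub_distrib]
      linarith [hA k hk])
    hc_anti hc_last
  have heq : ∑ i ∈ range n, c i * (l i - a i)
      = ∑ i ∈ range n, l i * c i - ∑ i ∈ range n, a i * c i := by
    rw [← Finset.sum_sub_distrib]
    exact Finset.sum_congr rfl fun i _ => by ring
  linarith [heq ▸ h]

lemma slopeNorm_bdd (Λ b : Fin p → ℝ) :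
    BddAbove (Set.range fun σ : Equiv.Perm (Fin p) => ∑ i, Λ i * |b (σ i)|) :=
  Set.Finite.bddAbove (Set.finite_range _)

lemma le_slopeNorm (Λ b : Fin p → ℝ) (σ : Equiv.Perm (Fin p)) :
    ∑ i, Λ i * |b (σ i)| ≤ slopeNorm Λ b :=
  le_ciSup (slopeNorm_bdd Λ b) σ

lemma slopeNorm_le (Λ b : Fin p → ℝ) {x : ℝ}
    (h : ∀ σ : Equiv.Perm (Fin p), ∑ i, Λ i * |b (σ i)| ≤ x) :
    slopeNorm Λ b ≤ x :=
  ciSup_le h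

lemma extF_mul (f g : Fin p → ℝ) (k : ℕ) :
    extF (fun i => f i * g i) k = extF f k * extF g k := by
  unfold extF; split <;> simp

lemma pairing_le_slopeNorm {Λ : Fin p → ℝ} (hΛanti : Antitone Λ)
    {π : Fin p → ℝ} (hπ : π ∈ dualBall Λ) (b : Fin p → ℝ) :
    ∑ i, π i * b i ≤ slopeNorm Λ b := by
  classical
  set σ := Tuple.sort (fun i => -|b i|) with hσ
  have hmono : Monotone ((fun i => -|b i|) ∘ σ) := Tuple.monotone_sort _
  have step1 : ∑ i, π i * b i = ∑ i, π (σ i) * b (σ i) :=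
    (Equiv.sum_comp σ (fun i => π i * b i)).symm
  have step2 : ∑ i, π (σ i) * b (σ i) ≤ ∑ i, |π (σ i)| * |b (σ i)| := by
    refine Finset.sum_le_sum fun i _ => ?_
    rw [← abs_mul]; exact le_abs_self _
  set a : ℕ → ℝ := extF (fun i => |π (σ i)|) with ha
  set c : ℕ → ℝ := extF (fun i => |b (σ i)|) with hc
  set l : ℕ → ℝ := extF Λ with hl
  have hA : ∀ k, k ≤ p → ∑ i ∈ range k, a i ≤ ∑ i ∈ range k, l i := by
    intro k hk
    have e1 : ∑ i ∈ range k, a i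
        = ∑ j ∈ univ.filter (fun j : Fin p => (j : ℕ) < k), |π (σ j)| :=
      (sum_firstSet_eq_range hk _).symm
    have e2 : ∑ j ∈ univ.filter (fun j : Fin p => (j : ℕ) < k), |π (σ j)|
        = ∑ j ∈ (univ.filter (fun j : Fin p => (j : ℕ) < k)).image σ, |π j| := by
      rw [Finset.sum_image (fun x _ y _ h => σ.injective h)]
    have hcard : ((univ.filter (fun j : Fin p => (j : ℕ) < k)).image σ).card = k := by
      rw [Finset.card_image_of_injective _ σ.injective, firstSet_card hk]
    have e3 := hπ ((univ.filter (fun j : Fin p => (j : ℕ) < k)).image σ)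
    rw [hcard] at e3
    have e4 : ∑ j ∈ univ.filter (fun j : Fin p => (j : ℕ) < k), Λ j
        = ∑ i ∈ range k, l i := sum_firstSet_eq_range hk Λ
    rw [e1, e2]
    exact e3.trans (le_of_eq e4)
  have hc_anti : ∀ i, i + 1 < p → c (i + 1) ≤ c i := by
    intro i hi
    have h1 : i < p := by omega
    have := hmono (show (⟨i, h1⟩ : Fin p) ≤ ⟨i + 1, hi⟩ by simp [Fin.le_def])
    simp only [Function.comp_apply, neg_le_neg_iff] at this
    simp only [hc, extF, dif_pos hi, dif_pos h1]
    exact this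
  have hc_nonneg : ∀ k, 0 ≤ c k := by
    intro k
    simp only [hc, extF]
    split <;> simp [abs_nonneg]
  have key := abel_le a c l p hA hc_anti (hc_nonneg _)
  have e5 : ∑ i, |π (σ i)| * |b (σ i)| = ∑ i ∈ range p, a i * c i := by
    rw [sum_univ_eq_sum_range_ext]
    exact Finset.sum_congr rfl fun i _ => extF_mul _ _ i
  have e6 : ∑ i ∈ range p, l i * c i = ∑ i, Λ i * |b (σ i)| := by
    rw [sum_univ_eq_sum_range_ext]
    exact (Finset.sum_congr rfl fun i _ => extF_mul _ _ i).symm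
  calc ∑ i, π i * b i = ∑ i, π (σ i) * b (σ i) := step1
    _ ≤ ∑ i, |π (σ i)| * |b (σ i)| := step2
    _ = ∑ i ∈ range p, a i * c i := e5
    _ ≤ ∑ i ∈ range p, l i * c i := key
    _ = ∑ i, Λ i * |b (σ i)| := e6
    _ ≤ slopeNorm Λ b := le_slopeNorm Λ b σ

lemma exists_pairing_eq {Λ : Fin p → ℝ} (hΛanti : Antitone Λ) (hΛnonneg : ∀ i, 0 ≤ Λ i)
    (b : Fin p → ℝ) (σ : Equiv.Perm (Fin p)) :
    ∃ π ∈ dualBall Λ, ∑ i, π i * b i = ∑ i, Λ i * |b (σ i)| := by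
  classical
  refine ⟨fun j => (if 0 ≤ b j then 1 else -1) * Λ (σ.symm j), ?_, ?_⟩
  · intro S
    have e1 : ∀ j, |(if 0 ≤ b j then (1:ℝ) else -1) * Λ (σ.symm j)| = Λ (σ.symm j) := by
      intro j
      rw [abs_mul]
      have : |if 0 ≤ b j then (1:ℝ) else -1| = 1 := by split <;> simp
      rw [this, one_mul, abs_of_nonneg (hΛnonneg _)]
    calc ∑ j ∈ S, |(if 0 ≤ b j then (1:ℝ) else -1) * Λ (σ.symm j)|
        = ∑ j ∈ S, Λ (σ.symm j) := Finset.sum_congr rfl fun j _ => e1 j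
      _ = ∑ j ∈ S.image σ.symm, Λ j := by
          rw [Finset.sum_image (fun x _ y _ h => σ.symm.injective h)]
      _ ≤ ∑ j ∈ univ.filter (fun j : Fin p => (j : ℕ) < (S.image σ.symm).card), Λ j :=
          sum_le_sum_firstSet hΛanti _
      _ = ∑ j ∈ univ.filter (fun j : Fin p => (j : ℕ) < S.card), Λ j := by
          rw [Finset.card_image_of_injective _ σ.symm.injective]
  · have e2 : ∀ j, ((if 0 ≤ b j then (1:ℝ) else -1) * Λ (σ.symm j)) * b j
        = Λ (σ.symm j) * |b j| := by
      intro j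
      split
      · rename_i h; rw [abs_of_nonneg h]; ring
      · rename_i h; rw [abs_of_neg (lt_of_not_ge h)]; ring
    calc ∑ j, ((if 0 ≤ b j then (1:ℝ) else -1) * Λ (σ.symm j)) * b j
        = ∑ j, Λ (σ.symm j) * |b j| := Finset.sum_congr rfl fun j _ => e2 j
      _ = ∑ i, Λ (σ.symm (σ i)) * |b (σ i)| :=
          (Equiv.sum_comp σ (fun j => Λ (σ.symm j) * |b j|)).symm
      _ = ∑ i, Λ i * |b (σ i)| := by simp

lemma slopeNorm_attained (Λ b : Fin p → ℝ) :
    ∃ σ : Equiv.Perm (Fin p), slopeNorm Λ b = ∑ i, Λ i * |b (σ i)| := by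
  obtain ⟨σ, -, hσ⟩ := Finset.exists_max_image (univ : Finset (Equiv.Perm (Fin p)))
    (fun σ => ∑ i, Λ i * |b (σ i)|) ⟨1, mem_univ 1⟩
  exact ⟨σ, le_antisymm (slopeNorm_le Λ b fun τ => hσ τ (mem_univ τ)) (le_slopeNorm Λ b σ)⟩

lemma slopeNorm_zero {Λ : Fin p → ℝ} : slopeNorm Λ (fun _ => 0) = 0 := by
  unfold slopeNorm
  simp [ciSup_const]

lemma slopeNorm_nonneg {Λ : Fin p → ℝ} (hΛnonneg : ∀ i, 0 ≤ Λ i) (b : Fin p → ℝ) :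
    0 ≤ slopeNorm Λ b := by
  refine le_trans ?_ (le_slopeNorm Λ b 1)
  exact Finset.sum_nonneg fun i _ => mul_nonneg (hΛnonneg i) (abs_nonneg _)

lemma single_le_slopeNorm {Λ : Fin p → ℝ} (hΛnonneg : ∀ i, 0 ≤ Λ i) (b : Fin p → ℝ)
    (i j : Fin p) : Λ i * |b j| ≤ slopeNorm Λ b := by
  classical
  refine le_trans ?_ (le_slopeNorm Λ b (Equiv.swap i j))
  have : Λ i * |b (Equiv.swap i j i)| = Λ i * |b j| := by rw [Equiv.swap_apply_left]
  rw [← this]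
  exact Finset.single_le_sum (f := fun k => Λ k * |b (Equiv.swap i j k)|)
    (fun k _ => mul_nonneg (hΛnonneg k) (abs_nonneg _)) (mem_univ i)

lemma slopeNorm_triangle {Λ : Fin p → ℝ} (hΛnonneg : ∀ i, 0 ≤ Λ i) (x y : Fin p → ℝ) :
    slopeNorm Λ (fun i => x i + y i) ≤ slopeNorm Λ x + slopeNorm Λ y := by
  refine slopeNorm_le _ _ fun σ => ?_
  calc ∑ i, Λ i * |x (σ i) + y (σ i)|
      ≤ ∑ i, (Λ i * |x (σ i)| + Λ i * |y (σ i)|) := by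
        refine Finset.sum_le_sum fun i _ => ?_
        rw [← mul_add]
        exact mul_le_mul_of_nonneg_left (abs_add_le _ _) (hΛnonneg i)
    _ = ∑ i, Λ i * |x (σ i)| + ∑ i, Λ i * |y (σ i)| := Finset.sum_add_distrib
    _ ≤ slopeNorm Λ x + slopeNorm Λ y :=
        add_le_add (le_slopeNorm Λ x σ) (le_slopeNorm Λ y σ)

lemma slopeNorm_convex {Λ : Fin p → ℝ} (hΛnonneg : ∀ i, 0 ≤ Λ i) (x y : Fin p → ℝ)
    {t : ℝ} (h0 : 0 ≤ t) (h1 : t ≤ 1) :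
    slopeNorm Λ (fun i => (1 - t) * x i + t * y i)
      ≤ (1 - t) * slopeNorm Λ x + t * slopeNorm Λ y := by
  refine slopeNorm_le _ _ fun σ => ?_
  calc ∑ i, Λ i * |(1 - t) * x (σ i) + t * y (σ i)|
      ≤ ∑ i, ((1 - t) * (Λ i * |x (σ i)|) + t * (Λ i * |y (σ i)|)) := by
        refine Finset.sum_le_sum fun i _ => ?_
        have habs : |(1 - t) * x (σ i) + t * y (σ i)| ≤ (1 - t) * |x (σ i)| + t * |y (σ i)| := by
          calc |(1 - t) * x (σ i) + t * y (σ i)|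
              ≤ |(1 - t) * x (σ i)| + |t * y (σ i)| := abs_add_le _ _
            _ = (1 - t) * |x (σ i)| + t * |y (σ i)| := by
                rw [abs_mul, abs_mul, abs_of_nonneg (by linarith : (0:ℝ) ≤ 1 - t),
                  abs_of_nonneg h0]
        calc Λ i * |(1 - t) * x (σ i) + t * y (σ i)|
            ≤ Λ i * ((1 - t) * |x (σ i)| + t * |y (σ i)|) :=
              mul_le_mul_of_nonneg_left habs (hΛnonneg i)
          _ = (1 - t) * (Λ i * |x (σ i)|) + t * (Λ i * |y (σ i)|) := by ring
    _ = (1 - t) * ∑ i, Λ i * |x (σ i)| + t * ∑ i, Λ i * |y (σ i)| := by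
        rw [Finset.sum_add_distrib, Finset.mul_sum, Finset.mul_sum]
    _ ≤ (1 - t) * slopeNorm Λ x + t * slopeNorm Λ y := by
        refine add_le_add ?_ ?_
        · exact mul_le_mul_of_nonneg_left (le_slopeNorm Λ x σ) (by linarith)
        · exact mul_le_mul_of_nonneg_left (le_slopeNorm Λ y σ) h0

lemma mulVec_apply_sum {n : ℕ} (X : Matrix (Fin n) (Fin p) ℝ) (h : Fin p → ℝ) (i : Fin n) :
    (X *ᵥ h) i = ∑ j, X i j * h j := by
  simp [Matrix.mulVec, dotProduct]

lemma quad_expand {n : ℕ} (X : Matrix (Fin n) (Fin p) ℝ) (Y : Fin n → ℝ) (b h : Fin p → ℝ) :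
    ∑ i, (Y i - (X *ᵥ (b + h)) i) ^ 2
      = ∑ i, (Y i - (X *ᵥ b) i) ^ 2
        - 2 * ∑ j, (∑ i, X i j * (Y i - (X *ᵥ b) i)) * h j
        + ∑ i, ((X *ᵥ h) i) ^ 2 := by
  have hmv : ∀ i, (X *ᵥ (b + h)) i = (X *ᵥ b) i + (X *ᵥ h) i := by
    intro i; rw [Matrix.mulVec_add]; rfl
  have cross : ∑ i, (Y i - (X *ᵥ b) i) * (X *ᵥ h) i
      = ∑ j, (∑ i, X i j * (Y i - (X *ᵥ b) i)) * h j := by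
    calc ∑ i, (Y i - (X *ᵥ b) i) * (X *ᵥ h) i
        = ∑ i, ∑ j, (X i j * (Y i - (X *ᵥ b) i)) * h j := by
          refine Finset.sum_congr rfl fun i _ => ?_
          rw [mulVec_apply_sum X h i, Finset.mul_sum]
          exact Finset.sum_congr rfl fun j _ => by ring
      _ = ∑ j, ∑ i, (X i j * (Y i - (X *ᵥ b) i)) * h j := Finset.sum_comm
      _ = ∑ j, (∑ i, X i j * (Y i - (X *ᵥ b) i)) * h j := by
          refine Finset.sum_congr rfl fun j _ => ?_
          rw [Finset.sum_mul]
  have e : ∑ i, (Y i - (X *ᵥ (b + h)) i) ^ 2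
      = ∑ i, ((Y i - (X *ᵥ b) i) ^ 2
          - 2 * ((Y i - (X *ᵥ b) i) * (X *ᵥ h) i) + ((X *ᵥ h) i) ^ 2) := by
    refine Finset.sum_congr rfl fun i _ => ?_
    rw [hmv i]; ring
  rw [e, Finset.sum_add_distrib, Finset.sum_sub_distrib, ← Finset.mul_sum, cross]

lemma slopeNorm_continuous (Λ : Fin p → ℝ) : Continuous (slopeNorm Λ) := by
  have heq : slopeNorm Λ = fun b =>
      (univ : Finset (Equiv.Perm (Fin p))).sup' ⟨1, mem_univ 1⟩
        (fun σ => ∑ i, Λ i * |b (σ i)|) := by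
    funext b
    exact (Finset.sup'_univ_eq_ciSup (fun σ : Equiv.Perm (Fin p) => ∑ i, Λ i * |b (σ i)|)).symm
  rw [heq]
  rw [continuous_iff_continuousAt]
  intro b
  refine ContinuousAt.finset_sup'_apply _ fun σ _ => ?_
  exact (continuous_finset_sum _ fun i _ =>
    (continuous_const.mul ((continuous_apply (σ i)).abs))).continuousAt

lemma ball_isCompact (R : ℝ) :
    IsCompact {b : Fin p → ℝ | ∑ i, (b i) ^ 2 ≤ R} := by
  refine Metric.isCompact_of_isClosed_isBounded ?_ ?_
  · have hc : Continuous fun b : Fin p → ℝ => ∑ i, (b i) ^ 2 :=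
      continuous_finset_sum _ fun i _ => (continuous_apply i).pow 2
    exact IsClosed.preimage hc isClosed_Iic
  · rw [Metric.isBounded_iff_subset_closedBall 0]
    refine ⟨Real.sqrt R, fun b hb => ?_⟩
    simp only [Metric.mem_closedBall]
    rw [dist_pi_le_iff (Real.sqrt_nonneg R)]
    intro i
    have h1 : (b i) ^ 2 ≤ R := le_trans (Finset.single_le_sum
      (f := fun j => (b j) ^ 2) (fun j _ => sq_nonneg _) (mem_univ i)) hb
    calc dist (b i) ((0 : Fin p → ℝ) i) = |b i| := by simp [Real.dist_eq]
      _ = Real.sqrt ((b i) ^ 2) := (Real.sqrt_sq_eq_abs _).symm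
      _ ≤ Real.sqrt R := Real.sqrt_le_sqrt h1

end SlopeAux

/-- Minimax equality: `max_{π ∈ C_Λ} min_{b ∈ M} r(b,π) = min_{b ∈ M} max_{π ∈ C_Λ} r(b,π)`,
and the common value equals `min_{b ∈ ℝᵖ} [½‖Y - Xb‖₂² + J_Λ(b)]`. -/
theorem slope_minimax {n p : ℕ} (hp : 0 < p)
    (X : Matrix (Fin n) (Fin p) ℝ) (Y : Fin n → ℝ)
    (Λ : Fin p → ℝ) (hΛanti : Antitone Λ) (hΛnonneg : ∀ i, 0 ≤ Λ i)
    (hlam1 : 0 < Λ ⟨0, hp⟩)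
    (M : Set (Fin p → ℝ))
    (hM : M = {b | ∑ i, (b i) ^ 2 ≤ (p : ℝ) * (∑ i, (Y i) ^ 2) ^ 2 / (4 * (Λ ⟨0, hp⟩) ^ 2)})
    (r : (Fin p → ℝ) → (Fin p → ℝ) → ℝ)
    (hr : r = fun b π => (1 / 2) * ∑ i, (Y i - (X *ᵥ b) i) ^ 2 + ∑ i, π i * b i) :
    sSup ((fun π => sInf ((fun b => r b π) '' M)) '' dualBall Λ)
        = sInf ((fun b => sSup ((fun π => r b π) '' dualBall Λ)) '' M) ∧
    sInf ((fun b => sSup ((fun π => r b π) '' dualBall Λ)) '' M)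
        = sInf (Set.range (slopeObj X Y Λ)) := by
  classical
  open SlopeAux Finset in
  have hrapp : ∀ b π : Fin p → ℝ,
      r b π = (1 / 2) * ∑ i, (Y i - (X *ᵥ b) i) ^ 2 + ∑ i, π i * b i := by
    intro b π; rw [hr]
  have hobj : ∀ b : Fin p → ℝ,
      slopeObj X Y Λ b = (1 / 2) * ∑ i, (Y i - (X *ᵥ b) i) ^ 2 + slopeNorm Λ b := fun b => rfl
  set i0 : Fin p := ⟨0, hp⟩ with hi0
  set R : ℝ := (p : ℝ) * (∑ i, (Y i) ^ 2) ^ 2 / (4 * (Λ i0) ^ 2) with hRdef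
  have hMset : M = {b : Fin p → ℝ | ∑ i, (b i) ^ 2 ≤ R} := hM
  have hR0 : (0 : ℝ) ≤ R := by
    rw [hRdef]
    apply div_nonneg
    · positivity
    · positivity
  have h0M : (0 : Fin p → ℝ) ∈ M := by
    rw [hMset]
    simp only [Set.mem_setOf_eq, Pi.zero_apply]
    simpa using hR0
  -- the inner sup equals the SLOPE objective
  have sup_eq : ∀ b : Fin p → ℝ,
      sSup ((fun π => r b π) '' dualBall Λ) = slopeObj X Y Λ b := by
    intro b
    refine IsGreatest.csSup_eq ⟨?_, ?_⟩
    · obtain ⟨σ, hσ⟩ := slopeNorm_attained Λ b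
      obtain ⟨π, hπC, hπeq⟩ := exists_pairing_eq hΛanti hΛnonneg b σ
      refine ⟨π, hπC, ?_⟩
      show r b π = slopeObj X Y Λ b
      rw [hrapp, hobj, hπeq, hσ]
    · rintro x ⟨π, hπC, rfl⟩
      show r b π ≤ slopeObj X Y Λ b
      rw [hrapp, hobj]
      exact add_le_add le_rfl (pairing_le_slopeNorm hΛanti hπC b)
  -- existence of the minimizer on M
  have Mcompact : IsCompact M := by rw [hMset]; exact ball_isCompact R
  have hcont : Continuous (slopeObj X Y Λ) := by
    have h1 : Continuous fun b : Fin p → ℝ => (1 / 2) * ∑ i, (Y i - (X *ᵥ b) i) ^ 2 := by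
      refine continuous_const.mul (continuous_finset_sum _ fun i _ => ?_)
      have he : (fun b : Fin p → ℝ => (X *ᵥ b) i) = fun b => ∑ j, X i j * b j :=
        funext fun b => mulVec_apply_sum X b i
      exact ((continuous_const.sub (by
        rw [he]
        exact continuous_finset_sum _ fun j _ => continuous_const.mul (continuous_apply j))).pow 2)
    exact h1.add (slopeNorm_continuous Λ)
  obtain ⟨bs, hbM, hbmin0⟩ := Mcompact.exists_isMinOn ⟨0, h0M⟩ hcont.continuousOn
  have hbmin : ∀ b ∈ M, slopeObj X Y Λ bs ≤ slopeObj X Y Λ b := fun b hb =>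
    isMinOn_iff.mp hbmin0 b hb
  -- bs is a global minimizer
  have global : ∀ b : Fin p → ℝ, slopeObj X Y Λ bs ≤ slopeObj X Y Λ b := by
    intro b
    by_cases hb : b ∈ M
    · exact hbmin b hb
    · have hbR : R < ∑ i, (b i) ^ 2 := by
        rw [hMset] at hb
        exact lt_of_not_ge hb
      obtain ⟨j, -, hj⟩ := Finset.exists_max_image univ (fun j => (b j) ^ 2)
        ⟨i0, Finset.mem_univ i0⟩
      have hsum : ∑ i, (b i) ^ 2 ≤ (p : ℝ) * (b j) ^ 2 := by
        calc ∑ i, (b i) ^ 2 ≤ ∑ _i : Fin p, (b j) ^ 2 :=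
              Finset.sum_le_sum fun i _ => hj i (Finset.mem_univ i)
          _ = (p : ℝ) * (b j) ^ 2 := by
              rw [Finset.sum_const, Finset.card_univ, Fintype.card_fin, nsmul_eq_mul]
      have hp' : (0 : ℝ) < p := by exact_mod_cast hp
      have h1 : (∑ i, (Y i) ^ 2) ^ 2 / (4 * (Λ i0) ^ 2) < (b j) ^ 2 := by
        have h2 : (p : ℝ) * ((∑ i, (Y i) ^ 2) ^ 2 / (4 * (Λ i0) ^ 2)) < (p : ℝ) * (b j) ^ 2 := by
          have := lt_of_lt_of_le hbR hsum
          rw [hRdef, mul_div_assoc] at this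
          exact this
        exact (mul_lt_mul_iff_right₀ hp').mp h2
      have h2 : (∑ i, (Y i) ^ 2) / 2 < Λ i0 * |b j| := by
        have hD : (0 : ℝ) < 4 * (Λ i0) ^ 2 := by positivity
        have hsq : ((∑ i, (Y i) ^ 2) / 2) ^ 2 < (Λ i0 * |b j|) ^ 2 := by
          have he : (Λ i0 * |b j|) ^ 2 = (Λ i0) ^ 2 * (b j) ^ 2 := by
            rw [mul_pow, sq_abs]
          rw [he]
          rw [div_lt_iff₀ hD] at h1
          nlinarith [h1, sq_nonneg (Λ i0)]
        exact lt_of_pow_lt_pow_left₀ 2 (mul_nonneg hlam1.le (abs_nonneg _)) hsq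
      have hzero : slopeObj X Y Λ (0 : Fin p → ℝ) = (1 / 2) * ∑ i, (Y i) ^ 2 := by
        rw [hobj]
        have hJ0 : slopeNorm Λ (0 : Fin p → ℝ) = 0 := slopeNorm_zero
        rw [hJ0, Matrix.mulVec_zero]
        simp
      calc slopeObj X Y Λ bs ≤ slopeObj X Y Λ (0 : Fin p → ℝ) := hbmin _ h0M
        _ = (1 / 2) * ∑ i, (Y i) ^ 2 := hzero
        _ ≤ Λ i0 * |b j| := by linarith
        _ ≤ slopeNorm Λ b := single_le_slopeNorm hΛnonneg b i0 j
        _ ≤ slopeObj X Y Λ b := by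
            rw [hobj]
            have : (0 : ℝ) ≤ (1 / 2) * ∑ i, (Y i - (X *ᵥ b) i) ^ 2 := by positivity
            linarith
  -- the dual certificate
  set πs : Fin p → ℝ := fun j => ∑ i, X i j * (Y i - (X *ᵥ bs) i) with hπs
  have hexp : ∀ h : Fin p → ℝ,
      (1 / 2) * ∑ i, (Y i - (X *ᵥ (bs + h)) i) ^ 2
        = (1 / 2) * ∑ i, (Y i - (X *ᵥ bs) i) ^ 2 - ∑ j, πs j * h j
          + (1 / 2) * ∑ i, ((X *ᵥ h) i) ^ 2 := by
    intro h
    rw [quad_expand X Y bs h]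
    ring
  -- subgradient inequality
  have subgrad : ∀ h : Fin p → ℝ,
      ∑ j, πs j * h j ≤ slopeNorm Λ (bs + h) - slopeNorm Λ bs := by
    intro h
    set C : ℝ := (1 / 2) * ∑ i, ((X *ᵥ h) i) ^ 2 with hCdef
    have hC0 : (0 : ℝ) ≤ C := by rw [hCdef]; positivity
    have key : ∀ t : ℝ, 0 < t → t ≤ 1 →
        ∑ j, πs j * h j ≤ (slopeNorm Λ (bs + h) - slopeNorm Λ bs) + t * C := by
      intro t ht0 ht1
      have hglob := global (bs + t • h)
      have hq : (1 / 2) * ∑ i, (Y i - (X *ᵥ (bs + t • h)) i) ^ 2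
          = (1 / 2) * ∑ i, (Y i - (X *ᵥ bs) i) ^ 2 - t * ∑ j, πs j * h j + t ^ 2 * C := by
        rw [quad_expand X Y bs (t • h)]
        have e1 : ∑ j, πs j * (t • h) j = t * ∑ j, πs j * h j := by
          rw [Finset.mul_sum]
          exact Finset.sum_congr rfl fun j _ => by
            simp only [Pi.smul_apply, smul_eq_mul]; ring
        have e2 : ∑ i, ((X *ᵥ (t • h)) i) ^ 2 = t ^ 2 * ∑ i, ((X *ᵥ h) i) ^ 2 := by
          rw [Matrix.mulVec_smul, Finset.mul_sum]
          exact Finset.sum_congr rfl fun i _ => by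
            simp only [Pi.smul_apply, smul_eq_mul]; ring
        have e3 : ∑ j, (∑ i, X i j * (Y i - (X *ᵥ bs) i)) * (t • h) j
            = ∑ j, πs j * (t • h) j := rfl
        rw [e3, e1, e2, hCdef]
        ring
      have hconv : slopeNorm Λ (bs + t • h)
          ≤ (1 - t) * slopeNorm Λ bs + t * slopeNorm Λ (bs + h) := by
        have he : (bs + t • h) = fun i => (1 - t) * bs i + t * ((bs + h) i) := by
          funext i
          simp only [Pi.add_apply, Pi.smul_apply, smul_eq_mul]
          ring
        rw [he]
        exact slopeNorm_convex hΛnonneg _ _ (by linarith) ht1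
      rw [hobj, hobj] at hglob
      rw [hq] at hglob
      have h3 : t * ∑ j, πs j * h j
          ≤ t * ((slopeNorm Λ (bs + h) - slopeNorm Λ bs) + t * C) := by nlinarith [hglob, hconv]
      exact le_of_mul_le_mul_left (by linarith [h3]) ht0
    by_contra hcon
    push_neg at hcon
    set D : ℝ := slopeNorm Λ (bs + h) - slopeNorm Λ bs with hDdef
    set ε : ℝ := ∑ j, πs j * h j - D with hεdef
    have hε0 : (0 : ℝ) < ε := by rw [hεdef]; linarith
    rcases le_or_gt C 0 with hC | hC
    · have := key 1 one_pos le_rfl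
      nlinarith
    · set t : ℝ := min 1 (ε / (2 * C)) with htdef
      have ht0 : 0 < t := lt_min one_pos (by positivity)
      have ht1 : t ≤ 1 := min_le_left _ _
      have hkey := key t ht0 ht1
      have htC : t * C ≤ ε / 2 := by
        calc t * C ≤ (ε / (2 * C)) * C :=
              mul_le_mul_of_nonneg_right (min_le_right _ _) hC.le
          _ = ε / 2 := by field_simp
      nlinarith
  -- πs lies in the dual ball
  have πs_dual : πs ∈ dualBall Λ := by
    have hsub : ∀ h : Fin p → ℝ, ∑ j, πs j * h j ≤ slopeNorm Λ h := by
      intro h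
      have h1 := subgrad h
      have h2 : slopeNorm Λ (bs + h) ≤ slopeNorm Λ bs + slopeNorm Λ h := by
        have he : bs + h = fun i => bs i + h i := rfl
        rw [he]
        exact slopeNorm_triangle hΛnonneg _ _
      linarith
    intro S
    set hS : Fin p → ℝ := fun j => if j ∈ S then (if 0 ≤ πs j then 1 else -1) else 0 with hhS
    have e1 : ∑ j, πs j * hS j = ∑ j ∈ S, |πs j| := by
      have he : ∀ j, πs j * hS j = if j ∈ S then |πs j| else 0 := by
        intro j
        simp only [hhS]
        split
        · split
          · rename_i h'; rw [abs_of_nonneg h']; ring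
          · rename_i h'; rw [abs_of_neg (lt_of_not_ge h')]; ring
        · ring
      rw [Finset.sum_congr rfl (fun j _ => he j), Finset.sum_ite_mem, Finset.univ_inter]
    have e2 : slopeNorm Λ hS
        ≤ ∑ j ∈ Finset.univ.filter (fun j : Fin p => (j : ℕ) < S.card), Λ j := by
      refine slopeNorm_le _ _ fun σ => ?_
      have he : ∀ i, Λ i * |hS (σ i)| = if σ i ∈ S then Λ i else 0 := by
        intro i
        simp only [hhS]
        split
        · have habs1 : |if 0 ≤ πs (σ i) then (1 : ℝ) else -1| = 1 := by split <;> simp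
          rw [habs1, mul_one]
        · simp
      rw [Finset.sum_congr rfl (fun i _ => he i), ← Finset.sum_filter]
      have hTcard : (Finset.univ.filter (fun i => σ i ∈ S)).card = S.card := by
        have himg : Finset.univ.filter (fun i => σ i ∈ S) = S.image σ.symm := by
          ext i
          simp only [Finset.mem_filter, Finset.mem_univ, true_and, Finset.mem_image]
          constructor
          · intro hi; exact ⟨σ i, hi, by simp⟩
          · rintro ⟨j, hj, rfl⟩; simpa using hj
        rw [himg, Finset.card_image_of_injective _ σ.symm.injective]
      calc ∑ i ∈ Finset.univ.filter (fun i => σ i ∈ S), Λ i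
          ≤ ∑ j ∈ Finset.univ.filter
              (fun j : Fin p => (j : ℕ) < (Finset.univ.filter (fun i => σ i ∈ S)).card), Λ j :=
            sum_le_sum_firstSet hΛanti _
        _ = ∑ j ∈ Finset.univ.filter (fun j : Fin p => (j : ℕ) < S.card), Λ j := by
            rw [hTcard]
    calc ∑ j ∈ S, |πs j| = ∑ j, πs j * hS j := e1.symm
      _ ≤ slopeNorm Λ hS := hsub hS
      _ ≤ _ := e2
  -- the pairing at bs attains the norm
  have pairing_bs : ∑ j, πs j * bs j = slopeNorm Λ bs := by
    refine le_antisymm (pairing_le_slopeNorm hΛanti πs_dual bs) ?_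
    have h1 := subgrad (fun j => -bs j)
    have h2 : bs + (fun j => -bs j) = fun _ => 0 := by funext j; simp
    rw [h2, slopeNorm_zero] at h1
    have h3 : ∑ j, πs j * (fun j => -bs j) j = -∑ j, πs j * bs j := by
      rw [← Finset.sum_neg_distrib]
      exact Finset.sum_congr rfl fun j _ => by ring
    rw [h3] at h1
    linarith
  -- bs minimizes r(·, πs) globally
  have rmin : ∀ b : Fin p → ℝ, r bs πs ≤ r b πs := by
    intro b
    set h : Fin p → ℝ := fun j => b j - bs j with hhdef
    have hb : bs + h = b := by funext j; simp [hhdef]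
    have hq := hexp h
    rw [hrapp, hrapp, ← hb, hq]
    have hsplit : ∑ j, πs j * (bs + h) j = ∑ j, πs j * bs j + ∑ j, πs j * h j := by
      rw [← Finset.sum_add_distrib]
      exact Finset.sum_congr rfl fun j _ => by
        simp only [Pi.add_apply]; ring
    rw [hsplit]
    have hC0 : (0 : ℝ) ≤ (1 / 2) * ∑ i, ((X *ᵥ h) i) ^ 2 := by positivity
    linarith
  have r_bs : r bs πs = slopeObj X Y Λ bs := by
    rw [hrapp, hobj, pairing_bs]
  -- lower bound for r(·, π) on M
  have hbdd : ∀ π : Fin p → ℝ, BddBelow ((fun b => r b π) '' M) := by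
    intro π
    refine ⟨-∑ j, |π j| * Real.sqrt R, ?_⟩
    rintro x ⟨b, hbM', rfl⟩
    show -∑ j, |π j| * Real.sqrt R ≤ r b π
    rw [hrapp]
    have h1 : ∀ j, |b j| ≤ Real.sqrt R := by
      intro j
      rw [hMset] at hbM'
      have h2 : (b j) ^ 2 ≤ R := le_trans (Finset.single_le_sum
        (f := fun i => (b i) ^ 2) (fun i _ => sq_nonneg _) (Finset.mem_univ j)) hbM'
      calc |b j| = Real.sqrt ((b j) ^ 2) := (Real.sqrt_sq_eq_abs _).symm
        _ ≤ Real.sqrt R := Real.sqrt_le_sqrt h2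
    have h3 : -∑ j, |π j| * Real.sqrt R ≤ ∑ j, π j * b j := by
      rw [← Finset.sum_neg_distrib]
      refine Finset.sum_le_sum fun j _ => ?_
      have h4 : |π j * b j| ≤ |π j| * Real.sqrt R := by
        rw [abs_mul]
        exact mul_le_mul_of_nonneg_left (h1 j) (abs_nonneg _)
      have h5 := neg_abs_le (π j * b j)
      linarith
    have h6 : (0 : ℝ) ≤ (1 / 2) * ∑ i, (Y i - (X *ᵥ b) i) ^ 2 := by positivity
    linarith
  -- assemble
  have LHS_eq : sSup ((fun π => sInf ((fun b => r b π) '' M)) '' dualBall Λ)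
      = slopeObj X Y Λ bs := by
    refine IsGreatest.csSup_eq ⟨⟨πs, πs_dual, ?_⟩, ?_⟩
    · refine IsLeast.csInf_eq ⟨⟨bs, hbM, r_bs⟩, ?_⟩
      rintro x ⟨b, hb', rfl⟩
      rw [← r_bs]
      exact rmin b
    · rintro x ⟨π, hπ, rfl⟩
      have h7 : sInf ((fun b => r b π) '' M) ≤ r bs π :=
        csInf_le (hbdd π) ⟨bs, hbM, rfl⟩
      have h8 : r bs π ≤ slopeObj X Y Λ bs := by
        rw [hrapp, hobj]
        exact add_le_add le_rfl (pairing_le_slopeNorm hΛanti hπ bs)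
      exact h7.trans h8
  have RHSfun : (fun b => sSup ((fun π => r b π) '' dualBall Λ)) = slopeObj X Y Λ :=
    funext sup_eq
  have RHS_eq : sInf ((fun b => sSup ((fun π => r b π) '' dualBall Λ)) '' M)
      = slopeObj X Y Λ bs := by
    rw [RHSfun]
    refine IsLeast.csInf_eq ⟨⟨bs, hbM, rfl⟩, ?_⟩
    rintro x ⟨b, hb', rfl⟩
    exact hbmin b hb'
  have range_eq : sInf (Set.range (slopeObj X Y Λ)) = slopeObj X Y Λ bs := by
    refine IsLeast.csInf_eq ⟨⟨bs, rfl⟩, ?_⟩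
    rintro x ⟨b, rfl⟩
    exact global b
  exact ⟨LHS_eq.trans RHS_eq.symm, RHS_eq.trans range_eq.symm⟩
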